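/- Let T be a bounded linear operator on a complex Hilbert space H. Then ‖Re T‖² ≤ (1/2)( ω(T*(Re T)) + ω(T(Re T)) ). -/

import Mathlib

open ContinuousLinearMap

/-- The numerical radius of a bounded linear operator on a complex Hilbert space:
`ω(T) = sup_{‖x‖ = 1} |⟨Tx, x⟩|`. -/
noncomputable def numRadius {H : Type*} [NormedAddCommGroup H] [InnerProductSpace ℂ H]
    (T : H →L[ℂ] H) : ℝ :=
  ⨆ x : {x : H // ‖x‖ = 1}, ‖(inner ℂ (T x) (x : H) : ℂ)‖

/-- The real part of an operator: `Re(T) = (T + T*)/2`. -/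
noncomputable def reOp {H : Type*} [NormedAddCommGroup H] [InnerProductSpace ℂ H]
    [CompleteSpace H] (T : H →L[ℂ] H) : H →L[ℂ] H :=
  (2 : ℂ)⁻¹ • (T + adjoint T)

lemma numRadius_nonneg {H : Type*} [NormedAddCommGroup H] [InnerProductSpace ℂ H]
    (S : H →L[ℂ] H) : 0 ≤ numRadius S :=
  Real.iSup_nonneg fun _ => norm_nonneg _

lemma inner_le_numRadius {H : Type*} [NormedAddCommGroup H] [InnerProductSpace ℂ H]
    (S : H →L[ℂ] H) (x : H) :
    ‖(inner ℂ (S x) x : ℂ)‖ ≤ numRadius S * ‖x‖ ^ 2 := by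
  rcases eq_or_ne x 0 with rfl | hx
  · simpa using mul_nonneg (numRadius_nonneg S) (by positivity : (0:ℝ) ≤ ‖(0:H)‖ ^ 2)
  · have hxn : (0:ℝ) < ‖x‖ := norm_pos_iff.mpr hx
    set u : H := ((‖x‖ : ℂ))⁻¹ • x with hu
    have hun : ‖u‖ = 1 := by
      rw [hu, norm_smul]
      simp [hxn.ne']
    have hbdd : BddAbove (Set.range fun y : {y : H // ‖y‖ = 1} =>
        ‖(inner ℂ (S y) (y : H) : ℂ)‖) := by
      refine ⟨‖S‖, ?_⟩
      rintro r ⟨⟨y, hy⟩, rfl⟩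
      calc ‖(inner ℂ (S y) y : ℂ)‖ ≤ ‖S y‖ * ‖y‖ := norm_inner_le_norm _ _
        _ ≤ ‖S‖ * ‖y‖ * ‖y‖ := by gcongr; exact S.le_opNorm y
        _ = ‖S‖ := by rw [hy]; ring
    have h1 : ‖(inner ℂ (S u) (u : H) : ℂ)‖ ≤ numRadius S :=
      le_ciSup hbdd (⟨u, hun⟩ : {y : H // ‖y‖ = 1})
    have h2 : (inner ℂ (S u) (u : H) : ℂ) = ((‖x‖ : ℂ))⁻¹ ^ 2 * inner ℂ (S x) x := by
      rw [hu]
      simp only [map_smul, inner_smul_left, inner_smul_right, map_inv₀, Complex.conj_ofReal]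
      ring
    have h3 : ‖(inner ℂ (S u) (u : H) : ℂ)‖ = (‖x‖ ^ 2)⁻¹ * ‖(inner ℂ (S x) x : ℂ)‖ := by
      rw [h2, norm_mul]
      congr 1
      rw [norm_pow, norm_inv, Complex.norm_real, Real.norm_of_nonneg hxn.le, inv_pow]
    rw [h3] at h1
    have := mul_le_mul_of_nonneg_left h1 (le_of_lt (by positivity : (0:ℝ) < ‖x‖ ^ 2))
    rw [← mul_assoc, mul_inv_cancel₀ (by positivity : (‖x‖:ℝ) ^ 2 ≠ 0), one_mul] at this
    linarith [this]

theorem norm_re_sq_le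
    {H : Type*} [NormedAddCommGroup H] [InnerProductSpace ℂ H] [CompleteSpace H]
    (T : H →L[ℂ] H) :
    ‖reOp T‖ ^ 2 ≤
      (1 / 2) * (numRadius (adjoint T ∘L reOp T) + numRadius (T ∘L reOp T)) := by
  set A := reOp T with hAdef
  have hA : ContinuousLinearMap.adjoint A = A := by
    rw [hAdef]
    rw [show reOp T = (2:ℂ)⁻¹ • (T + adjoint T) from rfl]
    rw [← star_eq_adjoint, star_smul, star_add, star_eq_adjoint, star_eq_adjoint,
      adjoint_adjoint]
    simp [add_comm]
  set w1 := numRadius (adjoint T ∘L A) with hw1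
  set w2 := numRadius (T ∘L A) with hw2
  set C : ℝ := (1/2) * (w1 + w2) with hC
  have hCnn : 0 ≤ C := by
    have := numRadius_nonneg (adjoint T ∘L A)
    have := numRadius_nonneg (T ∘L A)
    rw [hC]; linarith
  have key : ∀ x : H, ‖A x‖ ^ 2 ≤ C * ‖x‖ ^ 2 := by
    intro x
    set y := A x with hy
    have e1 : (inner ℂ (A y) x : ℂ) = (‖y‖ : ℂ) ^ 2 := by
      rw [← hA, adjoint_inner_left, ← hy]
      exact inner_self_eq_norm_sq_to_K y
    have e2 : (inner ℂ (A y) x : ℂ)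
        = (2:ℂ)⁻¹ * (inner ℂ ((T ∘L A) x) x + inner ℂ ((adjoint T ∘L A) x) x) := by
      have hAy : A y = (2:ℂ)⁻¹ • (T y + adjoint T y) := rfl
      rw [hAy, inner_smul_left, inner_add_left]
      simp [comp_apply, ← hy, map_inv₀, map_ofNat]
    have e3 : (‖y‖:ℝ) ^ 2 = ‖(inner ℂ (A y) x : ℂ)‖ := by
      rw [e1]
      rw [norm_pow, Complex.norm_real, Real.norm_of_nonneg (norm_nonneg y)]
    have e4 : ‖(inner ℂ (A y) x : ℂ)‖
        ≤ (1/2) * (‖(inner ℂ ((T ∘L A) x) x : ℂ)‖ + ‖(inner ℂ ((adjoint T ∘L A) x) x : ℂ)‖) := by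
      rw [e2, norm_mul]
      have : ‖((2:ℂ))⁻¹‖ = (1/2 : ℝ) := by norm_num [norm_inv]
      rw [this]
      gcongr
      exact norm_add_le _ _
    have b1 : ‖(inner ℂ ((T ∘L A) x) x : ℂ)‖ ≤ w2 * ‖x‖ ^ 2 := inner_le_numRadius _ x
    have b2 : ‖(inner ℂ ((adjoint T ∘L A) x) x : ℂ)‖ ≤ w1 * ‖x‖ ^ 2 := inner_le_numRadius _ x
    calc ‖A x‖ ^ 2 = ‖(inner ℂ (A y) x : ℂ)‖ := by rw [← e3, hy]
      _ ≤ (1/2) * (‖(inner ℂ ((T ∘L A) x) x : ℂ)‖ + ‖(inner ℂ ((adjoint T ∘L A) x) x : ℂ)‖) := e4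
      _ ≤ (1/2) * (w2 * ‖x‖ ^ 2 + w1 * ‖x‖ ^ 2) := by linarith
      _ = C * ‖x‖ ^ 2 := by rw [hC]; ring
  have hb : ∀ x : H, ‖A x‖ ≤ Real.sqrt C * ‖x‖ := by
    intro x
    have h := key x
    have h2 : ‖A x‖ ^ 2 ≤ (Real.sqrt C * ‖x‖) ^ 2 := by
      rw [mul_pow, Real.sq_sqrt hCnn]; exact h
    have := Real.sqrt_le_sqrt h2
    rwa [Real.sqrt_sq (norm_nonneg _), Real.sqrt_sq (by positivity)] at this
  have hnorm : ‖A‖ ≤ Real.sqrt C := opNorm_le_bound _ (Real.sqrt_nonneg _) hb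
  calc ‖A‖ ^ 2 ≤ Real.sqrt C ^ 2 := by
        exact pow_le_pow_left₀ (norm_nonneg _) hnorm 2
    _ = C := Real.sq_sqrt hCnn
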